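/- Let L be a finite meet-semilattice, p ∈ L with p > ⊥, and let α : L_(p) × {0 < 1} → Bl_p(L) be the map sending (x,0) ↦ x and (x,1) ↦ (p,x), where L_(p) = {x ∈ L : x ≱ p and p ∨ x exists}. Then α is an open embedding of posets (its image is a downward-closed subset, and α is an order isomorphism onto its image), and the complement of the image of α in Bl_p(L) is exactly {x ∈ L : p ∨ x does not exist in L}. -/

import Mathlib

/-- Membership predicate for the carrier of the combinatorial blowup `Bl_p(L)`:
`inl x` stands for an element `x ∈ L` with `x ≱ p`, and `inr x` stands for the
new pair `(p, x)` where `x ≱ p` and the join `p ∨ x` exists in `L`. -/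
def BlowupMem {L : Type} [SemilatticeInf L] (p : L) : L ⊕ L → Prop
  | .inl x => ¬ p ≤ x
  | .inr x => ¬ p ≤ x ∧ ∃ j, IsLUB {p, x} j

/-- The combinatorial blowup of a meet-semilattice `L` at `p` (Feichtner–Kozlov). -/
def Blowup (L : Type) [SemilatticeInf L] (p : L) : Type :=
  {z : L ⊕ L // BlowupMem p z}

/-- The order relation of the combinatorial blowup. -/
def bleRel {L : Type} [SemilatticeInf L] : L ⊕ L → L ⊕ L → Prop
  | .inl x, .inl y => x ≤ y
  | .inl x, .inr y => x ≤ y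
  | .inr x, .inr y => x ≤ y
  | .inr _, .inl _ => False

instance {L : Type} [SemilatticeInf L] (p : L) : PartialOrder (Blowup L p) where
  le a b := bleRel a.1 b.1
  le_refl a := by rcases a with ⟨(x | x), h⟩ <;> simp [bleRel]
  le_trans a b c hab hbc := by
    rcases a with ⟨(x | x), hx⟩ <;> rcases b with ⟨(y | y), hy⟩ <;>
      rcases c with ⟨(z | z), hz⟩ <;>
      simp only [bleRel] at * <;>
      first
        | exact le_trans hab hbc
        | exact hbc.elim
        | exact hab.elim
  le_antisymm a b hab hba := by
    rcases a with ⟨(x | x), hx⟩ <;> rcases b with ⟨(y | y), hy⟩ <;>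
      simp only [bleRel] at * <;>
      first
        | exact Subtype.ext (congrArg Sum.inl (le_antisymm hab hba))
        | exact Subtype.ext (congrArg Sum.inr (le_antisymm hab hba))
        | exact hab.elim
        | exact hba.elim


/-- The subposet `L_(p) = {x ∈ L : x ≱ p and p ∨ x exists in L}`. -/
def Lp (L : Type) [SemilatticeInf L] (p : L) : Type :=
  {x : L // ¬ p ≤ x ∧ ∃ j, IsLUB {p, x} j}

instance (L : Type) [SemilatticeInf L] (p : L) : PartialOrder (Lp L p) :=
  Subtype.partialOrder _

/-- The map `α : L_(p) × {0 < 1} → Bl_p(L)`, sending `(x,0) ↦ x` and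
`(x,1) ↦ (p,x)`. -/
def alphaMap {L : Type} [SemilatticeInf L] (p : L) (q : Lp L p × Bool) : Blowup L p :=
  match q with
  | (x, false) => ⟨Sum.inl x.1, x.2.1⟩
  | (x, true) => ⟨Sum.inr x.1, x.2⟩


lemma exists_lub_of_bdd {L : Type} [SemilatticeInf L] [Fintype L] {p x j : L}
    (hj : p ≤ j) (hx : x ≤ j) : ∃ m, IsLUB {p, x} m := by
  classical
  set U : Finset L := Finset.univ.filter (fun u => p ≤ u ∧ x ≤ u) with hU
  have hne : U.Nonempty := ⟨j, by simp [hU, hj, hx]⟩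
  refine ⟨U.inf' hne id, ?_, ?_⟩
  · rintro a (rfl | rfl)
    · exact Finset.le_inf' hne id (fun u hu => (Finset.mem_filter.mp hu).2.1)
    · exact Finset.le_inf' hne id (fun u hu => (Finset.mem_filter.mp hu).2.2)
  · intro u hu
    have : u ∈ U := by
      simp [hU, hu (Set.mem_insert _ _), hu (Set.mem_insert_of_mem _ rfl)]
    exact Finset.inf'_le id this

/-- `α` is an open embedding of posets: it is an order embedding,
its image is a downward-closed (open) subset of `Bl_p(L)`, and its complement
consists exactly of the elements `x ∈ L` for which `p ∨ x` does not exist. -/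
theorem alphaMap_open_embedding {L : Type} [SemilatticeInf L] [OrderBot L] [Fintype L]
    (p : L) (hp : ⊥ < p) :
    (∀ q r : Lp L p × Bool, alphaMap p q ≤ alphaMap p r ↔ q ≤ r) ∧
    IsLowerSet (Set.range (alphaMap p)) ∧
    (Set.range (alphaMap p))ᶜ =
      {z : Blowup L p | ∃ x : L, z.1 = Sum.inl x ∧ ¬ ∃ j, IsLUB {p, x} j} := by
  refine ⟨?_, ?_, ?_⟩
  · rintro ⟨x, bx⟩ ⟨y, yb⟩
    cases bx <;> cases yb
    · exact ⟨fun h => ⟨h, le_rfl⟩, fun h => h.1⟩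
    · exact ⟨fun h => ⟨h, Bool.false_le _⟩, fun h => h.1⟩
    · exact ⟨fun h => h.elim, fun h => absurd h.2 (by simp)⟩
    · exact ⟨fun h => ⟨h, le_rfl⟩, fun h => h.1⟩
  · rintro ⟨(a|a), ha⟩ ⟨(b|b), hb⟩ hba hmem
    · -- a = inl a, b = inl b
      obtain ⟨⟨⟨y, hy⟩, c⟩, heq⟩ := hmem
      cases c
      · have h : y = a := Sum.inl.inj (congrArg Subtype.val heq)
        subst h
        have hba' : b ≤ y := hba
        obtain ⟨j, hj⟩ := hy.2
        obtain ⟨m, hm⟩ := exists_lub_of_bdd (hj.1 (Set.mem_insert _ _))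
          (hba'.trans (hj.1 (Set.mem_insert_of_mem _ rfl)))
        exact ⟨(⟨b, hb, m, hm⟩, false), rfl⟩
      · exact (Sum.inr_ne_inl (congrArg Subtype.val heq : (Sum.inr y : L ⊕ L) = Sum.inl a)).elim
    · exact (hba : False).elim
    · -- a = inr a, b = inl b
      have hba' : b ≤ a := hba
      obtain ⟨j, hj⟩ := ha.2
      obtain ⟨m, hm⟩ := exists_lub_of_bdd (hj.1 (Set.mem_insert _ _))
        (hba'.trans (hj.1 (Set.mem_insert_of_mem _ rfl)))
      exact ⟨(⟨b, hb, m, hm⟩, false), rfl⟩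
    · exact ⟨(⟨b, hb⟩, true), rfl⟩
  · ext ⟨(a|a), ha⟩
    · show (¬ ∃ q, alphaMap p q = ⟨Sum.inl a, ha⟩) ↔ ∃ x : L, Sum.inl a = Sum.inl x ∧ ¬ ∃ j, IsLUB {p, x} j
      constructor
      · intro h
        exact ⟨a, rfl, fun hj => h ⟨(⟨a, ha, hj⟩, false), rfl⟩⟩
      · rintro ⟨x, hx, hnj⟩ ⟨⟨⟨y, hy⟩, c⟩, heq⟩
        cases Sum.inl.inj hx
        cases c
        · have h : y = a := Sum.inl.inj (congrArg Subtype.val heq)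
          exact hnj (h ▸ hy.2)
        · exact Sum.inr_ne_inl (congrArg Subtype.val heq : (Sum.inr y : L ⊕ L) = Sum.inl a)
    · show (¬ ∃ q, alphaMap p q = ⟨Sum.inr a, ha⟩) ↔ ∃ x : L, (Sum.inr a : L ⊕ L) = Sum.inl x ∧ ¬ ∃ j, IsLUB {p, x} j
      constructor
      · intro h; exact absurd ⟨(⟨a, ha⟩, true), rfl⟩ h
      · rintro ⟨x, hx, -⟩; exact (Sum.inr_ne_inl hx).elim
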